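/- arXiv:1109.6287 — 7 statements merged into one kernel-verified Lean document; each statement's English description precedes it below -/
import Mathlib

section
/- Let A and B be abelian groups, let m ≥ 1 be an integer, and let φ : A → B and ψ : B → A be additive group homomorphisms satisfying ψ ∘ φ = m • id_A and φ ∘ ψ = m • id_B. Let Γ be a fully invariant subgroup of A, and let Γ* be the smallest fully invariant subgroup of B containing the image φ(Γ). Then m • x ∈ φ(Γ) for every x ∈ Γ*; in particular, every element of the quotient group Γ*/φ(Γ) has order dividing m. -/
/-- A subgroup is fully invariant if it is stable under every additive endomorphism. -/
def FullyInvariant {A : Type*} [AddCommGroup A] (Γ : AddSubgroup A) : Prop :=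
  ∀ f : A →+ A, Γ.map f ≤ Γ

theorem stmt0 {A B : Type*} [AddCommGroup A] [AddCommGroup B]
    (m : ℕ) (hm : 1 ≤ m) (φ : A →+ B) (ψ : B →+ A)
    (hψφ : ∀ a : A, ψ (φ a) = m • a) (hφψ : ∀ b : B, φ (ψ b) = m • b)
    (Γ : AddSubgroup A) (hΓ : FullyInvariant Γ)
    (Γstar : AddSubgroup B) (hΓstar : FullyInvariant Γstar)
    (hsub : Γ.map φ ≤ Γstar)
    (hmin : ∀ K : AddSubgroup B, FullyInvariant K → Γ.map φ ≤ K → Γstar ≤ K) :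
    (∀ x ∈ Γstar, m • x ∈ Γ.map φ) ∧
    (∀ y : Γstar ⧸ (Γ.map φ).addSubgroupOf Γstar, addOrderOf y ∣ m) := by
  set S : AddSubgroup B := Γ.map φ with hS
  set K : AddSubgroup B := ⨆ g : B →+ B, S.map g with hK
  have hKinv : FullyInvariant K := by
    intro f
    rw [AddSubgroup.map_le_iff_le_comap]
    refine iSup_le fun g => ?_
    rw [← AddSubgroup.map_le_iff_le_comap, AddSubgroup.map_map]
    exact le_iSup (fun g : B →+ B => S.map g) (f.comp g)
  have hSK : S ≤ K := by
    have := le_iSup (fun g : B →+ B => S.map g) (AddMonoidHom.id B)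
    simpa using this
  have hstarK : Γstar ≤ K := hmin K hKinv hSK
  have hKψ : ∀ x ∈ K, ψ x ∈ Γ := by
    intro x hx
    have : K ≤ Γ.comap ψ := by
      refine iSup_le fun g => ?_
      rintro b ⟨c, ⟨a, ha, rfl⟩, rfl⟩
      exact hΓ ((ψ.comp g).comp φ) ⟨a, ha, rfl⟩
    exact this hx
  have key : ∀ x ∈ Γstar, m • x ∈ S := by
    intro x hx
    have hψx : ψ x ∈ Γ := hKψ x (hstarK hx)
    exact ⟨ψ x, hψx, hφψ x⟩
  refine ⟨key, fun y => ?_⟩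
  rw [addOrderOf_dvd_iff_nsmul_eq_zero]
  induction y using QuotientAddGroup.induction_on with
  | H x =>
    rw [← QuotientAddGroup.mk_nsmul, QuotientAddGroup.eq_zero_iff]
    exact key x x.2
end

section
/- Let A and A' be abelian groups, let Γ be a finitely generated subgroup of A, let Γ' be a subgroup of A', and let m, m' ≥ 1 be integers. Then the following are equivalent: (i) there exists an additive group homomorphism φ : A → A' whose kernel is finite and such that the index of φ(Γ) ∩ Γ' in φ(Γ) is finite; (ii) there exists an additive group homomorphism φ : A → A' whose kernel is finite and such that the index of φ(m•Γ) ∩ (m'•Γ') in φ(m•Γ) is finite. Here m•Γ denotes the subgroup {m•g : g ∈ Γ}. -/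
open AddSubgroup
set_option maxHeartbeats 1000000

private lemma fg_map' {A A' : Type*} [AddGroup A] [AddGroup A'] {P : AddSubgroup A}
    (h : P.FG) (φ : A →+ A') : (P.map φ).FG := by
  classical
  obtain ⟨S, hS⟩ := h
  exact ⟨S.image φ, by rw [Finset.coe_image, ← AddMonoidHom.map_closure, hS]⟩

private lemma fg_of_le' {A : Type*} [AddCommGroup A] {H K : AddSubgroup A}
    (hK : K.FG) (h : H ≤ K) : H.FG := by
  have h1 : AddGroup.FG K := (AddGroup.fg_iff_addSubgroup_fg K).mpr hK
  have h2 : Module.Finite ℤ K := Module.Finite.iff_addGroup_fg.mpr h1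
  have hfg : (AddSubgroup.toIntSubmodule (H.addSubgroupOf K)).FG :=
    IsNoetherian.noetherian _
  have h3 : (H.addSubgroupOf K).FG := (Submodule.fg_iff_addSubgroup_fg _).mp hfg
  have h4 := fg_map' h3 K.subtype
  rwa [AddSubgroup.addSubgroupOf_map_subtype, inf_eq_left.mpr h] at h4

private lemma map_zsmul_le' {A : Type*} [AddCommGroup A] (c : ℤ) (K : AddSubgroup A) :
    K.map (zsmulAddGroupHom c) ≤ K := by
  rintro x ⟨y, hy, rfl⟩
  simpa [zsmulAddGroupHom] using K.zsmul_mem hy c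

private lemma relIndex_smul' {A : Type*} [AddCommGroup A] {K : AddSubgroup A} (hK : K.FG)
    {n : ℕ} (hn : 1 ≤ n) : (K.map (zsmulAddGroupHom (n : ℤ))).relIndex K ≠ 0 := by
  set J := (K.map (zsmulAddGroupHom (n : ℤ))).addSubgroupOf K with hJ
  have h1 : AddGroup.FG K := (AddGroup.fg_iff_addSubgroup_fg K).mpr hK
  have hfin : Finite (K ⧸ J) := by
    apply AddCommGroup.finite_of_fg_torsion
    intro x
    induction x using QuotientAddGroup.induction_on with
    | H k =>
      rw [isOfFinAddOrder_iff_nsmul_eq_zero]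
      refine ⟨n, hn, ?_⟩
      have : (n • QuotientAddGroup.mk k : K ⧸ J) = QuotientAddGroup.mk (n • k) := by
        simp
      rw [this, QuotientAddGroup.eq_zero_iff]
      rw [hJ, AddSubgroup.mem_addSubgroupOf]
      exact ⟨(k : A), k.2, by push_cast [zsmulAddGroupHom]; simp⟩
  exact AddSubgroup.index_ne_zero_of_finite

private lemma map_comm' {A A' : Type*} [AddCommGroup A] [AddCommGroup A'] (φ : A →+ A')
    (c : ℤ) (S : AddSubgroup A) :
    (S.map (zsmulAddGroupHom c)).map φ = (S.map φ).map (zsmulAddGroupHom c) := by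
  rw [AddSubgroup.map_map, AddSubgroup.map_map]
  congr 1
  ext x
  simp [zsmulAddGroupHom]

private lemma zsmul_map_comm' {A : Type*} [AddCommGroup A] (c c' : ℤ) (S : AddSubgroup A) :
    (S.map (zsmulAddGroupHom c)).map (zsmulAddGroupHom c') =
      (S.map (zsmulAddGroupHom c')).map (zsmulAddGroupHom c) := by
  rw [AddSubgroup.map_map, AddSubgroup.map_map]
  congr 1
  ext x
  show c' • c • x = c • c' • x
  rw [smul_comm]

private lemma relindex_def' {A : Type*} [AddCommGroup A] (H K : AddSubgroup A) :
    (H.addSubgroupOf K).index = H.relIndex K := rfl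

theorem stmt2 {A A' : Type*} [AddCommGroup A] [AddCommGroup A']
    (Γ : AddSubgroup A) (hΓ : Γ.FG) (Γ' : AddSubgroup A')
    (m m' : ℕ) (hm : 1 ≤ m) (hm' : 1 ≤ m') :
    (∃ φ : A →+ A', Finite φ.ker ∧
        ((Γ.map φ ⊓ Γ').addSubgroupOf (Γ.map φ)).index ≠ 0) ↔
    (∃ φ : A →+ A', Finite φ.ker ∧
        (((Γ.map (zsmulAddGroupHom (m : ℤ))).map φ ⊓
            Γ'.map (zsmulAddGroupHom (m' : ℤ))).addSubgroupOf
          ((Γ.map (zsmulAddGroupHom (m : ℤ))).map φ)).index ≠ 0) := by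
  constructor
  · intro hh
    obtain ⟨φ, hker, h⟩ := hh
    refine ⟨φ, hker, ?_⟩
    rw [relindex_def'] at h ⊢
    rw [map_comm']
    set Γφ := Γ.map φ with hΓφdef
    have hΓφ : Γφ.FG := fg_map' hΓ φ
    have hH : (Γφ ⊓ Γ').FG := fg_of_le' hΓφ inf_le_left
    set H := Γφ ⊓ Γ' with hHdef
    set X := Γφ.map (zsmulAddGroupHom (m : ℤ)) with hXdef
    have h3 : H.relIndex Γφ ≠ 0 := h
    have key : ((H.map (zsmulAddGroupHom (m' : ℤ))).map
        (zsmulAddGroupHom (m : ℤ))).relIndex X ≠ 0 := by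
      have h1 : (H.map (zsmulAddGroupHom (m' : ℤ))).relIndex H ≠ 0 := relIndex_smul' hH hm'
      have h2 : ((H.map (zsmulAddGroupHom (m' : ℤ))).map
          (zsmulAddGroupHom (m : ℤ))).relIndex (H.map (zsmulAddGroupHom (m' : ℤ))) ≠ 0 :=
        relIndex_smul' (fg_map' hH _) hm
      have hΓφrel := AddSubgroup.relIndex_ne_zero_trans
        (AddSubgroup.relIndex_ne_zero_trans h2 h1) h3
      exact fun h0 => hΓφrel
        (AddSubgroup.relIndex_eq_zero_of_le_right (map_zsmul_le' _ Γφ) h0)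
    have hle : (H.map (zsmulAddGroupHom (m' : ℤ))).map (zsmulAddGroupHom (m : ℤ)) ≤
        X ⊓ Γ'.map (zsmulAddGroupHom (m' : ℤ)) := by
      refine le_inf ?_ ?_
      · exact AddSubgroup.map_mono ((map_zsmul_le' _ H).trans inf_le_left)
      · rw [zsmul_map_comm']
        exact AddSubgroup.map_mono ((map_zsmul_le' _ H).trans inf_le_right)
    exact ne_zero_of_dvd_ne_zero key (AddSubgroup.relIndex_dvd_of_le_left X hle)
  · intro hh
    obtain ⟨φ, hker, h⟩ := hh
    refine ⟨φ, hker, ?_⟩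
    rw [relindex_def'] at h ⊢
    rw [map_comm'] at h
    set Γφ := Γ.map φ with hΓφdef
    have h' : ((Γφ.map (zsmulAddGroupHom (m : ℤ))) ⊓
        Γ'.map (zsmulAddGroupHom (m' : ℤ))).relIndex
        (Γφ.map (zsmulAddGroupHom (m : ℤ))) ≠ 0 := h
    have key : ((Γφ.map (zsmulAddGroupHom (m : ℤ))) ⊓
        Γ'.map (zsmulAddGroupHom (m' : ℤ))).relIndex Γφ ≠ 0 :=
      AddSubgroup.relIndex_ne_zero_trans h' (relIndex_smul' (fg_map' hΓ φ) hm)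
    have hle : (Γφ.map (zsmulAddGroupHom (m : ℤ))) ⊓
        Γ'.map (zsmulAddGroupHom (m' : ℤ)) ≤ Γφ ⊓ Γ' :=
      inf_le_inf (map_zsmul_le' _ Γφ) (map_zsmul_le' _ Γ')
    exact ne_zero_of_dvd_ne_zero key (AddSubgroup.relIndex_dvd_of_le_left Γφ hle)
end

section
/- Let A, B, A', B' be abelian groups whose torsion subgroups are finite. Let m, m' ≥ 1 be integers, let ι : A → B and ι̂ : B → A be additive group homomorphisms with ι̂ ∘ ι = m • id_A and ι ∘ ι̂ = m • id_B, and let ι' : A' → B' and ι̂' : B' → A' be additive group homomorphisms with ι̂' ∘ ι' = m' • id_{A'} and ι' ∘ ι̂' = m' • id_{B'}. Let Γ be a subgroup of A and Γ' a subgroup of A'. Then the following are equivalent: (i) there exists an additive group homomorphism φ : A → A' with finite kernel such that φ(Γ) ∩ Γ' has finite index in φ(Γ); (ii) there exists an additive group homomorphism φ' : B → B' with finite kernel such that φ'(ι(Γ)) ∩ ι'(Γ') has finite index in φ'(ι(Γ)). -/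
private lemma aux_finite_preimage {X Y : Type*} [AddCommGroup X] [AddCommGroup Y]
    (f : X →+ Y) (hf : Finite f.ker) {s : Set Y} (hs : s.Finite) :
    (f ⁻¹' s).Finite := by
  have hfib : ∀ y : Y, (f ⁻¹' {y}).Finite := by
    intro y
    rcases Set.eq_empty_or_nonempty (f ⁻¹' {y}) with h | ⟨x, hx⟩
    · simp [h]
    · have hker : (f.ker : Set X).Finite := Set.toFinite _
      refine (hker.image (fun k => x + k)).subset ?_
      intro z hz
      simp only [Set.mem_preimage, Set.mem_singleton_iff] at hz hx
      refine ⟨z - x, ?_, by simp⟩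
      simp [AddMonoidHom.mem_ker, map_sub, hz, hx]
  have : f ⁻¹' s = ⋃ y ∈ s, f ⁻¹' {y} := by
    ext z; simp
  rw [this]
  exact hs.biUnion fun y _ => hfib y

private lemma aux_finite_ker_comp {X Y Z : Type*} [AddCommGroup X] [AddCommGroup Y]
    [AddCommGroup Z] (f : X →+ Y) (g : Y →+ Z) (hf : Finite f.ker) (hg : Finite g.ker) :
    Finite (g.comp f).ker := by
  have h : ((g.comp f).ker : Set X) = f ⁻¹' (g.ker : Set Y) := by
    ext x; simp [AddMonoidHom.mem_ker]
  have : ((g.comp f).ker : Set X).Finite := by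
    rw [h]; exact aux_finite_preimage f hf (Set.toFinite _)
  exact this.to_subtype

private lemma aux_relIndex_map {X Y : Type*} [AddCommGroup X] [AddCommGroup Y]
    (f : X →+ Y) {H K : AddSubgroup X} (h : H.relIndex K ≠ 0) :
    (H.map f).relIndex (K.map f) ≠ 0 := by
  have hdvd : ((H.map f).comap f).relIndex K ∣ H.relIndex K :=
    AddSubgroup.relIndex_dvd_of_le_left K (AddSubgroup.le_comap_map f H)
  rw [AddSubgroup.relIndex_comap] at hdvd
  intro h0
  rw [h0] at hdvd
  exact h (Nat.eq_zero_of_zero_dvd hdvd)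

private lemma aux_kerfin {X Y : Type*} [AddCommGroup X] [AddCommGroup Y] (f : X →+ Y) (n : ℕ)
    (hn : 1 ≤ n) (ht : {x : X | IsOfFinAddOrder x}.Finite) (h : ∀ x : X, f x = 0 → n • x = 0) :
    Finite f.ker := by
  have hsub : (f.ker : Set X) ⊆ {x : X | IsOfFinAddOrder x} := by
    intro x hx
    exact isOfFinAddOrder_iff_nsmul_eq_zero.2 ⟨n, hn, h x hx⟩
  exact (ht.subset hsub).to_subtype

private lemma aux_key {X : Type*} [AddCommGroup X] (H K : AddSubgroup X) :
    ((H ⊓ K).addSubgroupOf H).index = K.relIndex H := by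
  rw [show ((H ⊓ K).addSubgroupOf H).index = (H ⊓ K).relIndex H from rfl,
    AddSubgroup.inf_relIndex_left]

theorem stmt3 {A B A' B' : Type*}
    [AddCommGroup A] [AddCommGroup B] [AddCommGroup A'] [AddCommGroup B']
    (htA : {a : A | IsOfFinAddOrder a}.Finite)
    (htB : {b : B | IsOfFinAddOrder b}.Finite)
    (htA' : {a : A' | IsOfFinAddOrder a}.Finite)
    (htB' : {b : B' | IsOfFinAddOrder b}.Finite)
    (m m' : ℕ) (hm : 1 ≤ m) (hm' : 1 ≤ m')
    (ι : A →+ B) (ιhat : B →+ A)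
    (hι₁ : ∀ a : A, ιhat (ι a) = m • a) (hι₂ : ∀ b : B, ι (ιhat b) = m • b)
    (ι' : A' →+ B') (ιhat' : B' →+ A')
    (hι₁' : ∀ a : A', ιhat' (ι' a) = m' • a) (hι₂' : ∀ b : B', ι' (ιhat' b) = m' • b)
    (Γ : AddSubgroup A) (Γ' : AddSubgroup A') :
    (∃ φ : A →+ A', Finite φ.ker ∧
        ((Γ.map φ ⊓ Γ').addSubgroupOf (Γ.map φ)).index ≠ 0) ↔
    (∃ φ' : B →+ B', Finite φ'.ker ∧
        (((Γ.map ι).map φ' ⊓ Γ'.map ι').addSubgroupOf ((Γ.map ι).map φ')).index ≠ 0) := by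
  have hkι : Finite ι.ker := by
    refine aux_kerfin ι m hm htA fun a ha => ?_
    rw [← hι₁ a, ha, map_zero]
  have hkιhat : Finite ιhat.ker := by
    refine aux_kerfin ιhat m hm htB fun b hb => ?_
    rw [← hι₂ b, hb, map_zero]
  have hkι' : Finite ι'.ker := by
    refine aux_kerfin ι' m' hm' htA' fun a ha => ?_
    rw [← hι₁' a, ha, map_zero]
  have hkιhat' : Finite ιhat'.ker := by
    refine aux_kerfin ιhat' m' hm' htB' fun b hb => ?_
    rw [← hι₂' b, hb, map_zero]
  constructor
  · rintro ⟨φ, hker, hidx⟩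
    rw [aux_key] at hidx
    refine ⟨ι'.comp (φ.comp ιhat), ?_, ?_⟩
    · exact aux_finite_ker_comp (φ.comp ιhat) ι'
        (aux_finite_ker_comp ιhat φ hkιhat hker) hkι'
    · rw [aux_key]
      have h1 : (Γ'.map ι').relIndex ((Γ.map φ).map ι') ≠ 0 := aux_relIndex_map ι' hidx
      have hle : (Γ.map ι).map (ι'.comp (φ.comp ιhat)) ≤ (Γ.map φ).map ι' := by
        rintro _ ⟨_, ⟨γ, hγ, rfl⟩, rfl⟩
        refine ⟨φ (ιhat (ι γ)), ?_, rfl⟩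
        rw [hι₁ γ, map_nsmul]
        exact AddSubgroup.nsmul_mem _ (AddSubgroup.mem_map_of_mem φ hγ) m
      intro h0
      exact h1 (AddSubgroup.relIndex_eq_zero_of_le_right hle h0)
  · rintro ⟨φ', hker, hidx⟩
    rw [aux_key] at hidx
    refine ⟨ιhat'.comp (φ'.comp ι), ?_, ?_⟩
    · exact aux_finite_ker_comp (φ'.comp ι) ιhat'
        (aux_finite_ker_comp ι φ' hkι hker) hkιhat'
    · rw [aux_key]
      have h1 : ((Γ'.map ι').map ιhat').relIndex (((Γ.map ι).map φ').map ιhat') ≠ 0 :=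
        aux_relIndex_map ιhat' hidx
      have heq : ((Γ.map ι).map φ').map ιhat' = Γ.map (ιhat'.comp (φ'.comp ι)) := by
        rw [AddSubgroup.map_map, AddSubgroup.map_map]
        rfl
      rw [heq] at h1
      have hle : (Γ'.map ι').map ιhat' ≤ Γ' := by
        rintro _ ⟨_, ⟨γ', hγ', rfl⟩, rfl⟩
        rw [hι₁' γ']
        exact AddSubgroup.nsmul_mem _ hγ' m'
      intro h0
      exact h1 (AddSubgroup.relIndex_eq_zero_of_le_left hle h0)
end

section
/- Let A and A' be abelian groups, let G and G' be finite abelian groups, and let r : A → G, r' : A' → G', φ : A → A', φ̄ : G → G' be additive group homomorphisms satisfying φ̄ ∘ r = r' ∘ φ. Let Γ be a subgroup of A and Γ' a subgroup of A', and suppose the index i of φ(Γ) ∩ Γ' in φ(Γ) is finite. Let ℓ be a prime number dividing neither i nor the order of the kernel of φ̄. Then: (a) the ℓ-adic valuation of |r(Γ)| is at most the ℓ-adic valuation of |r'(Γ')|; (b) the ℓ-adic valuation of the exponent of r(Γ) is at most the ℓ-adic valuation of the exponent of r'(Γ'); (c) if ℓ divides |r(Γ)| then ℓ divides |r'(Γ')|.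 -/
private lemma aux_card_eq {K K' : Type*} [AddGroup K] [AddGroup K'] [Finite K]
    (f : K →+ K') : Nat.card K = Nat.card f.range * Nat.card f.ker := by
  rw [AddSubgroup.card_eq_card_quotient_mul_card_addSubgroup f.ker,
    Nat.card_congr (QuotientAddGroup.quotientKerEquivRange f).toEquiv]

private lemma aux_not_dvd {K : Type*} [AddGroup K] [Finite K] {ℓ : ℕ} (hℓ : ℓ.Prime)
    (h : ∀ x : K, addOrderOf x ≠ ℓ) : ¬ ℓ ∣ Nat.card K := by
  intro hdvd
  have : Fintype K := Fintype.ofFinite K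
  rw [Nat.card_eq_fintype_card] at hdvd
  have := Fact.mk hℓ
  obtain ⟨x, hx⟩ := exists_prime_addOrderOf_dvd_card ℓ hdvd
  exact h x hx

theorem stmt5 {A A' G G' : Type*}
    [AddCommGroup A] [AddCommGroup A'] [AddCommGroup G] [AddCommGroup G']
    [Finite G] [Finite G']
    (r : A →+ G) (r' : A' →+ G') (φ : A →+ A') (φbar : G →+ G')
    (hcomm : ∀ a : A, φbar (r a) = r' (φ a))
    (Γ : AddSubgroup A) (Γ' : AddSubgroup A')
    (i : ℕ) (hi : i = ((Γ.map φ ⊓ Γ').addSubgroupOf (Γ.map φ)).index) (hifin : i ≠ 0)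
    (ℓ : ℕ) (hℓ : ℓ.Prime) (hℓi : ¬ ℓ ∣ i) (hℓker : ¬ ℓ ∣ Nat.card φbar.ker) :
    (Nat.card ↥(Γ.map r)).factorization ℓ ≤ (Nat.card ↥(Γ'.map r')).factorization ℓ ∧
    (AddMonoid.exponent ↥(Γ.map r)).factorization ℓ
      ≤ (AddMonoid.exponent ↥(Γ'.map r')).factorization ℓ ∧
    (ℓ ∣ Nat.card ↥(Γ.map r) → ℓ ∣ Nat.card ↥(Γ'.map r')) := by
  have hcard' : Nat.card ↥(Γ'.map r') ≠ 0 := Nat.card_pos.ne'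
  -- Key elementwise fact: i • (anything in φbar(r(Γ))) lies in r'(Γ')
  have key : ∀ g ∈ (Γ.map r).map φbar, i • g ∈ Γ'.map r' := by
    intro g hg
    rw [AddSubgroup.mem_map] at hg
    obtain ⟨x, hx, rfl⟩ := hg
    rw [AddSubgroup.mem_map] at hx
    obtain ⟨a, ha, rfl⟩ := hx
    have hφa : φ a ∈ Γ.map φ := AddSubgroup.mem_map_of_mem φ ha
    have hmem : i • (⟨φ a, hφa⟩ : ↥(Γ.map φ)) ∈ (Γ.map φ ⊓ Γ').addSubgroupOf (Γ.map φ) := by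
      rw [hi]
      exact AddSubgroup.nsmul_index_mem _ _
    rw [AddSubgroup.mem_addSubgroupOf, AddSubgroup.mem_inf] at hmem
    have h2 : i • φ a ∈ Γ' := by simpa using hmem.2
    rw [hcomm, ← map_nsmul]
    exact AddSubgroup.mem_map_of_mem r' h2
  set M : AddSubgroup G' := (Γ.map r).map φbar with hM
  have hrange : (φbar.comp (Γ.map r).subtype).range = M := by
    ext g
    simp [hM, AddSubgroup.mem_map, AddMonoidHom.mem_range, Subtype.exists]
  have hk1 : ¬ ℓ ∣ Nat.card (φbar.comp (Γ.map r).subtype).ker := by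
    apply aux_not_dvd hℓ
    intro x hx
    apply hℓker
    have hmemker : ((x : ↥(Γ.map r)) : G) ∈ φbar.ker := by
      have h1 : (φbar.comp (Γ.map r).subtype) (x : ↥(Γ.map r)) = 0 :=
        AddMonoidHom.mem_ker.mp x.2
      rw [AddMonoidHom.mem_ker]
      simpa using h1
    have hord : addOrderOf (⟨((x : ↥(Γ.map r)) : G), hmemker⟩ : φbar.ker) = ℓ := by
      rw [AddSubgroup.addOrderOf_mk, AddSubgroup.addOrderOf_coe, AddSubgroup.addOrderOf_coe, hx]
    rw [← hord]
    exact addOrderOf_dvd_natCard _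
  have hfac1 : Nat.card ↥(Γ.map r)
      = Nat.card ↥M * Nat.card (φbar.comp (Γ.map r).subtype).ker := by
    have := aux_card_eq (φbar.comp (Γ.map r).subtype)
    rwa [hrange] at this
  set f₀ : ↥M →+ G' := AddMonoidHom.mk' (fun x => i • (x : G'))
    (by intro a b; simp [smul_add]) with hf₀
  have hfr : f₀.range ≤ Γ'.map r' := by
    rintro g ⟨x, rfl⟩
    exact key _ x.2
  have hk2 : ¬ ℓ ∣ Nat.card f₀.ker := by
    apply aux_not_dvd hℓ
    intro x hx
    apply hℓi
    have h0 : i • ((x : ↥M) : G') = 0 := by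
      have h1 : f₀ (x : ↥M) = 0 := AddMonoidHom.mem_ker.mp x.2
      simpa [hf₀] using h1
    have hord : addOrderOf ((x : ↥M) : G') = ℓ := by
      rw [AddSubgroup.addOrderOf_coe, AddSubgroup.addOrderOf_coe, hx]
    rw [← hord]
    exact addOrderOf_dvd_of_nsmul_eq_zero h0
  have hfac2 : Nat.card ↥M = Nat.card f₀.range * Nat.card f₀.ker := aux_card_eq f₀
  have main : ∀ k : ℕ, ℓ ^ k ∣ Nat.card ↥(Γ.map r) → ℓ ^ k ∣ Nat.card ↥(Γ'.map r') := by
    intro k hdvd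
    rw [hfac1] at hdvd
    have c1 : Nat.Coprime (ℓ ^ k) (Nat.card (φbar.comp (Γ.map r).subtype).ker) :=
      ((Nat.Prime.coprime_iff_not_dvd hℓ).mpr hk1).pow_left k
    have hdvd2 : ℓ ^ k ∣ Nat.card ↥M := c1.dvd_of_dvd_mul_right hdvd
    rw [hfac2] at hdvd2
    have c2 : Nat.Coprime (ℓ ^ k) (Nat.card f₀.ker) :=
      ((Nat.Prime.coprime_iff_not_dvd hℓ).mpr hk2).pow_left k
    exact (c2.dvd_of_dvd_mul_right hdvd2).trans (AddSubgroup.card_dvd_of_le hfr)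
  refine ⟨?_, ?_, ?_⟩
  · rw [← Nat.Prime.pow_dvd_iff_le_factorization hℓ hcard']
    exact main _ (Nat.ordProj_dvd _ _)
  · -- exponent part
    set k := (AddMonoid.exponent ↥(Γ.map r)).factorization ℓ with hk
    obtain ⟨x, hx⟩ :=
      Nat.Prime.exists_addOrderOf_eq_pow_padic_val_nat_add_exponent ↥(Γ.map r) hℓ
    have hz : addOrderOf ((x : G)) = ℓ ^ k := by
      rw [AddSubgroup.addOrderOf_coe, hx]
    set w := φbar (x : G) with hw
    have hwmem : w ∈ M := AddSubgroup.mem_map_of_mem φbar x.2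
    have hmdvd : addOrderOf w ∣ ℓ ^ k := by
      rw [← hz]; exact addOrderOf_map_dvd φbar _
    have hmne : addOrderOf w ≠ 0 := (addOrderOf_pos w).ne'
    have hker : (addOrderOf w) • (x : G) ∈ φbar.ker := by
      rw [AddMonoidHom.mem_ker, map_nsmul, ← hw]
      exact addOrderOf_nsmul_eq_zero w
    have hq : addOrderOf ((addOrderOf w) • (x : G)) = ℓ ^ k / addOrderOf w := by
      rw [addOrderOf_nsmul_of_dvd hmne (by rw [hz]; exact hmdvd), hz]
    have hqdvd : ℓ ^ k / addOrderOf w ∣ Nat.card φbar.ker := by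
      rw [← hq]
      have := addOrderOf_dvd_natCard (⟨_, hker⟩ : φbar.ker)
      rwa [AddSubgroup.addOrderOf_mk] at this
    obtain ⟨j, hj, hmj⟩ := (Nat.dvd_prime_pow hℓ).mp hmdvd
    have hjk : j = k := by
      by_contra hne
      have hjk' : j < k := lt_of_le_of_ne hj hne
      have hdl : ℓ ∣ ℓ ^ k / addOrderOf w := by
        rw [hmj, Nat.pow_div hjk'.le hℓ.pos]
        exact dvd_pow_self ℓ (Nat.sub_ne_zero_of_lt hjk')
      exact hℓker (hdl.trans hqdvd)
    have hwo : addOrderOf w = ℓ ^ k := by rw [hmj, hjk]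
    have hcop : (addOrderOf w).Coprime i := by
      rw [hwo]
      exact ((Nat.Prime.coprime_iff_not_dvd hℓ).mpr hℓi).pow_left k
    have hiw : addOrderOf (i • w) = ℓ ^ k := by rw [hcop.addOrderOf_nsmul, hwo]
    have hiw' : i • w ∈ Γ'.map r' := key w hwmem
    have hde : ℓ ^ k ∣ AddMonoid.exponent ↥(Γ'.map r') := by
      have := AddMonoid.addOrder_dvd_exponent (⟨i • w, hiw'⟩ : ↥(Γ'.map r'))
      rwa [AddSubgroup.addOrderOf_mk, hiw] at this
    have hexp' : AddMonoid.exponent ↥(Γ'.map r') ≠ 0 := AddMonoid.exponent_ne_zero_of_finite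
    exact (Nat.Prime.pow_dvd_iff_le_factorization hℓ hexp').mp hde
  · intro hdvd
    have h1 : ℓ ^ 1 ∣ Nat.card ↥(Γ.map r) := by simpa using hdvd
    simpa using main 1 h1
end

section
/- Let A be an abelian group such that every nonzero additive group endomorphism of A has finite kernel, and such that for every nonzero additive endomorphism φ of A there exist an additive endomorphism ψ of A and an integer m ≥ 1 with ψ ∘ φ = m • id_A. Let P_1, …, P_r ∈ A be elements of infinite order. Then the following are equivalent: (1) the points P_1, …, P_r are almost free, i.e. for all additive endomorphisms φ_1, …, φ_r of A, Σ_i φ_i(P_i) = 0 implies φ_i(P_i) = 0 for all i; (2) for every integer n and all additive endomorphisms φ_2, …, φ_r of A, n • P_1 + Σ_{i=2}^r φ_i(P_i) = 0 implies n • P_1 = 0 and φ_i(P_i) = 0 for all i ≥ 2. -/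
theorem stmt7 {A : Type*} [AddCommGroup A]
    (hker : ∀ φ : A →+ A, φ ≠ 0 → Finite φ.ker)
    (hquasi : ∀ φ : A →+ A, φ ≠ 0 →
      ∃ (ψ : A →+ A) (m : ℕ), 1 ≤ m ∧ ∀ a : A, ψ (φ a) = m • a)
    {r : ℕ} (P₁ : A) (P : Fin r → A)
    (hP₁ : ¬ IsOfFinAddOrder P₁) (hP : ∀ i, ¬ IsOfFinAddOrder (P i)) :
    (∀ (φ₁ : A →+ A) (φ : Fin r → A →+ A),
        φ₁ P₁ + ∑ i, φ i (P i) = 0 → φ₁ P₁ = 0 ∧ ∀ i, φ i (P i) = 0) ↔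
    (∀ (n : ℤ) (φ : Fin r → A →+ A),
        n • P₁ + ∑ i, φ i (P i) = 0 → n • P₁ = 0 ∧ ∀ i, φ i (P i) = 0) := by
  constructor
  · intro h1 n φ heq
    have := h1 (zsmulAddGroupHom n) φ (by simpa [zsmulAddGroupHom] using heq)
    simpa [zsmulAddGroupHom] using this
  · intro h2 φ₁ φ heq
    by_cases hφ₁ : φ₁ = 0
    · subst hφ₁
      have := h2 0 φ (by simpa using heq)
      simpa using this
    · obtain ⟨ψ, m, hm, hψ⟩ := hquasi φ₁ hφ₁
      exfalso
      have heq2 : (m : ℤ) • P₁ + ∑ i, (ψ.comp (φ i)) (P i) = 0 := by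
        have := congrArg ψ heq
        simp only [map_add, map_sum, map_zero, hψ] at this
        simpa [natCast_zsmul] using this
      have := (h2 (m : ℤ) (fun i => ψ.comp (φ i)) heq2).1
      have hfin : IsOfFinAddOrder P₁ := by
        rw [isOfFinAddOrder_iff_zsmul_eq_zero]
        exact ⟨(m : ℤ), Int.natCast_ne_zero.mpr (Nat.one_le_iff_ne_zero.mp hm), this⟩
      exact hP₁ hfin
end

section
/- Let A be an abelian group such that every nonzero additive group endomorphism of A has finite kernel, and such that for every nonzero additive endomorphism φ of A there exist an additive endomorphism ψ of A and an integer m ≥ 1 with ψ ∘ φ = m • id_A. Let P_1, …, P_r ∈ A be almost free points, and let Γ be the smallest fully invariant subgroup of A containing P_1, …, P_r. If Q ∈ A satisfies n • Q ∉ Γ for every integer n ≥ 1, then the points P_1, …, P_r, Q are almost free. -/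
theorem stmt8 {A : Type*} [AddCommGroup A]
    (hker : ∀ φ : A →+ A, φ ≠ 0 → Finite φ.ker)
    (hquasi : ∀ φ : A →+ A, φ ≠ 0 →
      ∃ (ψ : A →+ A) (m : ℕ), 1 ≤ m ∧ ∀ a : A, ψ (φ a) = m • a)
    {r : ℕ} (P : Fin r → A) (hP : ∀ i, ¬ IsOfFinAddOrder (P i))
    (hfree : ∀ φ : Fin r → A →+ A, ∑ i, φ i (P i) = 0 → ∀ i, φ i (P i) = 0)
    (Γ : AddSubgroup A) (hΓ : FullyInvariant Γ) (hPΓ : ∀ i, P i ∈ Γ)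
    (hmin : ∀ K : AddSubgroup A, FullyInvariant K → (∀ i, P i ∈ K) → Γ ≤ K)
    (Q : A) (hQ : ∀ n : ℕ, 1 ≤ n → n • Q ∉ Γ) :
    (¬ IsOfFinAddOrder Q) ∧
    ∀ (φ : Fin r → A →+ A) (ψ : A →+ A),
      ∑ i, φ i (P i) + ψ Q = 0 → (∀ i, φ i (P i) = 0) ∧ ψ Q = 0 := by
  constructor
  · intro h
    have hn : addOrderOf Q • Q = 0 := addOrderOf_nsmul_eq_zero Q
    exact hQ (addOrderOf Q) h.addOrderOf_pos (hn ▸ Γ.zero_mem)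
  · intro φ ψ hsum
    by_cases hψ : ψ = 0
    · subst hψ
      exact ⟨hfree φ (by simpa using hsum), by simp⟩
    · exfalso
      obtain ⟨χ, m, hm, hχ⟩ := hquasi ψ hψ
      have hψQ : ψ Q = -∑ i, φ i (P i) := by
        rw [eq_neg_iff_add_eq_zero, add_comm]; exact hsum
      have hQm : m • Q = -∑ i, χ (φ i (P i)) := by
        rw [← hχ, hψQ, map_neg, map_sum]
      have hmem : m • Q ∈ Γ := by
        rw [hQm]
        exact Γ.neg_mem (AddSubgroup.sum_mem Γ fun i _ =>
          hΓ ((χ.comp (φ i))) ⟨P i, hPΓ i, rfl⟩)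
      exact hQ m hm hmem
end

section
/- Let A be an abelian group and let X and Y be disjoint subsets of A such that every finite tuple of pairwise distinct points of X ∪ Y is almost free. Let Γ be the smallest fully invariant subgroup of A containing X and Γ' the smallest fully invariant subgroup of A containing Y. Then Γ ∩ Γ' = {0}. -/
open scoped Classical in
/-- Elements representable as `∑ t in T, φ t t` with `T ⊆ X`. -/
def reprSet {A : Type*} [AddCommGroup A] (X : Set A) : AddSubgroup A where
  carrier := {a | ∃ (T : Finset A) (φ : A → (A →+ A)), ↑T ⊆ X ∧ a = ∑ t ∈ T, φ t t}
  zero_mem' := ⟨∅, fun _ => 0, by simp, by simp⟩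
  add_mem' := by
    rintro a b ⟨T₁, φ₁, hT₁, rfl⟩ ⟨T₂, φ₂, hT₂, rfl⟩
    refine ⟨T₁ ∪ T₂, fun t => (if t ∈ T₁ then φ₁ t else 0) + (if t ∈ T₂ then φ₂ t else 0),
      ?_, ?_⟩
    · rw [Finset.coe_union]; exact Set.union_subset hT₁ hT₂
    · simp only [AddMonoidHom.add_apply]
      rw [Finset.sum_add_distrib]
      have e1 : ∀ x ∈ T₁ ∪ T₂, (if x ∈ T₁ then φ₁ x else 0) x =
          (if x ∈ T₁ then φ₁ x x else 0) := fun x _ => by split <;> simp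
      have e2 : ∀ x ∈ T₁ ∪ T₂, (if x ∈ T₂ then φ₂ x else 0) x =
          (if x ∈ T₂ then φ₂ x x else 0) := fun x _ => by split <;> simp
      rw [Finset.sum_congr rfl e1, Finset.sum_congr rfl e2, Finset.sum_ite_mem,
        Finset.sum_ite_mem, Finset.union_inter_cancel_left, Finset.union_inter_cancel_right]
  neg_mem' := by
    rintro a ⟨T, φ, hT, rfl⟩
    exact ⟨T, fun t => -(φ t), hT, by simp⟩

theorem reprSet_fullyInvariant {A : Type*} [AddCommGroup A] (X : Set A) :
    FullyInvariant (reprSet X) := by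
  rintro f a ⟨b, ⟨T, φ, hT, rfl⟩, rfl⟩
  exact ⟨T, fun t => f.comp (φ t), hT, by simp [map_sum]⟩

theorem subset_reprSet {A : Type*} [AddCommGroup A] (X : Set A) : X ⊆ reprSet X := by
  intro x hx
  exact ⟨{x}, fun _ => AddMonoidHom.id A, by simpa using hx, by simp⟩

open scoped Classical in
theorem stmt10 {A : Type*} [AddCommGroup A] (X Y : Set A) (hXY : Disjoint X Y)
    (hfree : ∀ (r : ℕ) (P : Fin r → A), Function.Injective P →
      (∀ i, P i ∈ X ∪ Y) →
      (∀ i, ¬ IsOfFinAddOrder (P i)) ∧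
      ∀ φ : Fin r → A →+ A, ∑ i, φ i (P i) = 0 → ∀ i, φ i (P i) = 0)
    (Γ Γ' : AddSubgroup A)
    (hΓ : FullyInvariant Γ) (hXΓ : X ⊆ Γ)
    (hΓmin : ∀ K : AddSubgroup A, FullyInvariant K → X ⊆ K → Γ ≤ K)
    (hΓ' : FullyInvariant Γ') (hYΓ' : Y ⊆ Γ')
    (hΓ'min : ∀ K : AddSubgroup A, FullyInvariant K → Y ⊆ K → Γ' ≤ K) :
    Γ ⊓ Γ' = ⊥ := by
  rw [eq_bot_iff]
  rintro a ⟨haΓ, haΓ'⟩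
  obtain ⟨T, φ, hT, ha1⟩ := hΓmin (reprSet X) (reprSet_fullyInvariant X) (subset_reprSet X) haΓ
  obtain ⟨T', ψ, hT', ha2⟩ :=
    hΓ'min (reprSet Y) (reprSet_fullyInvariant Y) (subset_reprSet Y) haΓ'
  have hdisj : Disjoint T T' := by
    rw [Finset.disjoint_coe.symm]
    exact Set.disjoint_of_subset hT hT' hXY
  set s : Finset A := T ∪ T' with hs
  set χ : A → (A →+ A) := fun t => if t ∈ T then φ t else -(ψ t) with hχ
  have hsum : ∑ t ∈ s, χ t t = 0 := by
    rw [hs, Finset.sum_union hdisj]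
    have h1 : ∑ t ∈ T, χ t t = a := by
      rw [ha1]; apply Finset.sum_congr rfl; intro t ht; simp [hχ, ht]
    have h2 : ∑ t ∈ T', χ t t = -a := by
      rw [ha2, ← Finset.sum_neg_distrib]
      apply Finset.sum_congr rfl
      intro t ht
      have : t ∉ T := fun h => (Finset.disjoint_left.mp hdisj h) ht
      simp [hχ, this]
    rw [h1, h2, add_neg_cancel]
  -- enumerate s
  set e := s.equivFin with he
  set P : Fin s.card → A := fun i => ((e.symm i : s) : A) with hP
  have hPinj : Function.Injective P := by
    intro i j h
    exact e.symm.injective (Subtype.ext h)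
  have hPmem : ∀ i, P i ∈ X ∪ Y := by
    intro i
    have : P i ∈ s := (e.symm i).2
    rcases Finset.mem_union.mp this with h | h
    · exact Or.inl (hT h)
    · exact Or.inr (hT' h)
  have key := (hfree s.card P hPinj hPmem).2 (fun i => χ (P i))
  have hsum' : ∑ i, χ (P i) (P i) = 0 := by
    rw [← hsum]
    rw [← Finset.sum_attach s (fun t => χ t t)]
    exact Equiv.sum_comp e.symm (fun x : s => χ x x)
  have hzero := key hsum'
  have hall : ∀ t ∈ s, χ t t = 0 := by
    intro t ht
    have := hzero (e ⟨t, ht⟩)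
    simpa [hP] using this
  have : a = 0 := by
    rw [ha1]
    apply Finset.sum_eq_zero
    intro t ht
    have := hall t (Finset.mem_union_left _ ht)
    simpa [hχ, ht] using this
  simp [this]
end
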